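/- Fix α ≥ 0, d > 0, k > 0, γ > 0, T_∞ > 0. The map h₀ ↦ ν_{h₀}, where ν_{h₀} is the unique positive root of h₀T_∞/(γ2^α d^{(α+1)/2}) = x^{α+1}[M(α/2+1/2,1/2,x²) + 2(√d h₀/k) x M(α/2+1,3/2,x²)], is strictly increasing on (0,∞) and bounded above by ν_∞, the unique positive root of kT_∞/(2^{α+1}d^{α/2+1}γ) = x^{α+2}M(α/2+1,3/2,x²). -/

import Mathlib

open Real Filter Topology

/-- The Kummer confluent hypergeometric function `M(a,b,z)`, defined by its power series. -/
noncomputable def kummerM (a b z : ℝ) : ℝ :=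
  ∑' s : ℕ, ((ascPochhammer ℝ s).eval a / ((ascPochhammer ℝ s).eval b * (Nat.factorial s : ℝ)))
      * z ^ s

lemma kummer_term_nonneg (a b z : ℝ) (ha : 0 < a) (hb : 0 < b) (hz : 0 ≤ z) (s : ℕ) :
    0 ≤ ((ascPochhammer ℝ s).eval a / ((ascPochhammer ℝ s).eval b * (Nat.factorial s : ℝ)))
      * z ^ s := by
  have h1 := ascPochhammer_pos s a ha
  have h2 := ascPochhammer_pos s b hb
  have h3 : (0:ℝ) < (Nat.factorial s : ℝ) := by positivity
  positivity

lemma kummer_summable (a b z : ℝ) (ha : 0 < a) (hb : 0 < b) (hz : 0 ≤ z) :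
    Summable (fun s : ℕ =>
      ((ascPochhammer ℝ s).eval a / ((ascPochhammer ℝ s).eval b * (Nat.factorial s : ℝ)))
        * z ^ s) := by
  apply summable_of_ratio_norm_eventually_le (r := 1/2) (by norm_num)
  filter_upwards [eventually_ge_atTop (max 1 ⌈2 * (a + 1) * z⌉₊)] with s hs
  have hs1 : (1:ℕ) ≤ s := le_trans (le_max_left _ _) hs
  have hs2 : 2 * (a + 1) * z ≤ (s:ℝ) := by
    refine le_trans (Nat.le_ceil _) ?_
    exact_mod_cast le_trans (le_max_right 1 _) hs
  have hsR : (1:ℝ) ≤ (s:ℝ) := by exact_mod_cast hs1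
  have h1 := ascPochhammer_pos s a ha
  have h2 := ascPochhammer_pos s b hb
  have h3 : (0:ℝ) < (Nat.factorial s : ℝ) := by positivity
  have hzs : 0 ≤ z ^ s := by positivity
  have heq : ((ascPochhammer ℝ (s+1)).eval a /
      ((ascPochhammer ℝ (s+1)).eval b * (Nat.factorial (s+1) : ℝ))) * z ^ (s+1)
      = (((ascPochhammer ℝ s).eval a / ((ascPochhammer ℝ s).eval b * (Nat.factorial s : ℝ)))
        * z ^ s) * ((a + s) * z / ((b + s) * (s + 1))) := by
    rw [ascPochhammer_succ_eval, ascPochhammer_succ_eval, Nat.factorial_succ,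
      pow_succ]
    push_cast
    field_simp
  have hbs : (0:ℝ) < b + s := by linarith
  have hratio : (a + s) * z / ((b + s) * (s + 1)) ≤ 1/2 := by
    rw [div_le_iff₀ (by positivity)]
    nlinarith [mul_nonneg (mul_nonneg ha.le (sub_nonneg.2 hsR)) hz,
      mul_le_mul_of_nonneg_left hs2 (Nat.cast_nonneg s : (0:ℝ) ≤ s),
      mul_nonneg hz (by linarith : (0:ℝ) ≤ (s:ℝ))]
  have hterm : 0 ≤ ((ascPochhammer ℝ s).eval a /
      ((ascPochhammer ℝ s).eval b * (Nat.factorial s : ℝ))) * z ^ s :=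
    kummer_term_nonneg a b z ha hb hz s
  have hratio0 : 0 ≤ (a + s) * z / ((b + s) * (s + 1)) := by positivity
  rw [Real.norm_of_nonneg (kummer_term_nonneg a b z ha hb hz (s+1)),
    Real.norm_of_nonneg hterm, heq]
  calc _ ≤ (((ascPochhammer ℝ s).eval a / ((ascPochhammer ℝ s).eval b * (Nat.factorial s : ℝ)))
        * z ^ s) * (1/2) := by
        exact mul_le_mul_of_nonneg_left hratio hterm
    _ = _ := by ring

lemma kummer_one_le (a b z : ℝ) (ha : 0 < a) (hb : 0 < b) (hz : 0 ≤ z) :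
    1 ≤ kummerM a b z := by
  have h := Summable.le_tsum (kummer_summable a b z ha hb hz) 0
    (fun i _ => kummer_term_nonneg a b z ha hb hz i)
  simpa [kummerM] using h

lemma kummer_mono (a b : ℝ) (ha : 0 < a) (hb : 0 < b) {z₁ z₂ : ℝ}
    (h0 : 0 ≤ z₁) (h12 : z₁ ≤ z₂) : kummerM a b z₁ ≤ kummerM a b z₂ := by
  refine Summable.tsum_le_tsum (fun s => ?_) (kummer_summable a b z₁ ha hb h0)
    (kummer_summable a b z₂ ha hb (h0.trans h12))
  have h1 := ascPochhammer_pos s a ha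
  have h2 := ascPochhammer_pos s b hb
  have h3 : (0:ℝ) < (Nat.factorial s : ℝ) := by positivity
  have : z₁ ^ s ≤ z₂ ^ s := pow_le_pow_left₀ h0 h12 s
  exact mul_le_mul_of_nonneg_left this (by positivity)

noncomputable def kF (α x : ℝ) : ℝ := x ^ (α + 1) * kummerM (α / 2 + 1 / 2) (1 / 2) (x ^ 2)
noncomputable def kG (α x : ℝ) : ℝ := x ^ (α + 1) * x * kummerM (α / 2 + 1) (3 / 2) (x ^ 2)

lemma kF_pos (α : ℝ) (hα : 0 ≤ α) {x : ℝ} (hx : 0 < x) : 0 < kF α x := by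
  have h1 : (1:ℝ) ≤ kummerM (α / 2 + 1 / 2) (1 / 2) (x ^ 2) :=
    kummer_one_le _ _ _ (by linarith) (by norm_num) (by positivity)
  exact mul_pos (Real.rpow_pos_of_pos hx _) (lt_of_lt_of_le one_pos h1)

lemma kG_nonneg (α : ℝ) (hα : 0 ≤ α) {x : ℝ} (hx : 0 < x) : 0 ≤ kG α x := by
  have h1 : (1:ℝ) ≤ kummerM (α / 2 + 1) (3 / 2) (x ^ 2) :=
    kummer_one_le _ _ _ (by linarith) (by norm_num) (by positivity)
  unfold kG
  exact mul_nonneg (mul_nonneg (Real.rpow_nonneg hx.le _) hx.le) (le_trans zero_le_one h1)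

lemma kF_mono (α : ℝ) (hα : 0 ≤ α) {x y : ℝ} (hx : 0 < x) (hxy : x ≤ y) :
    kF α x ≤ kF α y := by
  have hM : kummerM (α / 2 + 1 / 2) (1 / 2) (x ^ 2) ≤ kummerM (α / 2 + 1 / 2) (1 / 2) (y ^ 2) :=
    kummer_mono _ _ (by linarith) (by norm_num) (by positivity) (by nlinarith)
  have hMpos : (0:ℝ) ≤ kummerM (α / 2 + 1 / 2) (1 / 2) (x ^ 2) :=
    le_trans zero_le_one (kummer_one_le _ _ _ (by linarith) (by norm_num) (by positivity))
  exact mul_le_mul (Real.rpow_le_rpow hx.le hxy (by linarith)) hM hMpos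
    (Real.rpow_nonneg (by linarith) _)

lemma kG_mono (α : ℝ) (hα : 0 ≤ α) {x y : ℝ} (hx : 0 < x) (hxy : x ≤ y) :
    kG α x ≤ kG α y := by
  have hM : kummerM (α / 2 + 1) (3 / 2) (x ^ 2) ≤ kummerM (α / 2 + 1) (3 / 2) (y ^ 2) :=
    kummer_mono _ _ (by linarith) (by norm_num) (by positivity) (by nlinarith)
  have hMpos : (0:ℝ) ≤ kummerM (α / 2 + 1) (3 / 2) (x ^ 2) :=
    le_trans zero_le_one (kummer_one_le _ _ _ (by linarith) (by norm_num) (by positivity))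
  have hy : 0 < y := lt_of_lt_of_le hx hxy
  refine mul_le_mul ?_ hM hMpos (by positivity)
  exact mul_le_mul (Real.rpow_le_rpow hx.le hxy (by linarith)) hxy hx.le
    (Real.rpow_nonneg hy.le _)


/-- monotonicity in `h₀` of the free-boundary coefficient, bounded above
by the limit coefficient `νinf`. -/
theorem nu_strictMono_and_bounded (α d k γ Tinf : ℝ)
    (hα : 0 ≤ α) (hd : 0 < d) (hk : 0 < k) (hγ : 0 < γ) (hT : 0 < Tinf)
    (νf : ℝ → ℝ)
    (hνf : ∀ h₀ : ℝ, 0 < h₀ → 0 < νf h₀ ∧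
      h₀ * Tinf / (γ * 2 ^ α * d ^ ((α + 1) / 2))
        = (νf h₀) ^ (α + 1) * (kummerM (α / 2 + 1 / 2) (1 / 2) ((νf h₀) ^ 2)
            + 2 * (Real.sqrt d * h₀ / k) * νf h₀ * kummerM (α / 2 + 1) (3 / 2) ((νf h₀) ^ 2)))
    (νinf : ℝ) (hνinf : 0 < νinf)
    (hνinfeq : k * Tinf / (2 ^ (α + 1) * d ^ (α / 2 + 1) * γ)
      = νinf ^ (α + 2) * kummerM (α / 2 + 1) (3 / 2) (νinf ^ 2)) :
    StrictMonoOn νf (Set.Ioi 0) ∧ ∀ h₀ : ℝ, 0 < h₀ → νf h₀ ≤ νinf := by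
  set D : ℝ := γ * 2 ^ α * d ^ ((α + 1) / 2) with hD
  set c : ℝ := 2 * Real.sqrt d / k with hc
  have hsd : (0:ℝ) < Real.sqrt d := Real.sqrt_pos.2 hd
  have hcpos : 0 < c := by positivity
  -- rewritten equation
  have Eq : ∀ h : ℝ, 0 < h →
      h * Tinf / D = kF α (νf h) + h * c * kG α (νf h) := by
    intro h hh
    rw [(hνf h hh).2]
    simp only [kF, kG, hc]
    field_simp
  -- the limit identity
  have e1 : νinf ^ (α + 2) = νinf ^ (α + 1) * νinf := by
    rw [show α + 2 = (α + 1) + 1 by ring, Real.rpow_add_one hνinf.ne']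
  have e2 : (2:ℝ) ^ (α + 1) = 2 ^ α * 2 := Real.rpow_add_one two_ne_zero α
  have e3 : d ^ (α / 2 + 1) = d ^ ((α + 1) / 2) * Real.sqrt d := by
    rw [Real.sqrt_eq_rpow, ← Real.rpow_add hd]
    congr 1; ring
  rw [e1] at hνinfeq
  have hCG : Tinf / D = c * kG α νinf := by
    have h2α : (0:ℝ) < (2:ℝ) ^ α := Real.rpow_pos_of_pos two_pos α
    have hdα : (0:ℝ) < d ^ ((α + 1) / 2) := Real.rpow_pos_of_pos hd _
    have : c * kG α νinf
        = c * (k * Tinf / (2 ^ (α + 1) * d ^ (α / 2 + 1) * γ)) := by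
      unfold kG; rw [hνinfeq]
    rw [this, e2, e3, hc, hD]
    field_simp
    try ring
  constructor
  · intro h₁ hm₁ h₂ hm₂ h12
    simp only [Set.mem_Ioi] at hm₁ hm₂
    obtain hp₁ := (hνf h₁ hm₁).1
    obtain hp₂ := (hνf h₂ hm₂).1
    by_contra hcon
    push_neg at hcon
    have hF21 : kF α (νf h₂) ≤ kF α (νf h₁) := kF_mono α hα hp₂ hcon
    have hG21 : kG α (νf h₂) ≤ kG α (νf h₁) := kG_mono α hα hp₂ hcon
    have hFpos := kF_pos α hα hp₁
    have hGnn := kG_nonneg α hα hp₂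
    have hEq : h₂ * (kF α (νf h₁) + h₁ * c * kG α (νf h₁))
        = h₁ * (kF α (νf h₂) + h₂ * c * kG α (νf h₂)) := by
      calc h₂ * (kF α (νf h₁) + h₁ * c * kG α (νf h₁))
          = h₂ * (h₁ * Tinf / D) := by rw [← Eq h₁ hm₁]
        _ = h₁ * (h₂ * Tinf / D) := by ring
        _ = h₁ * (kF α (νf h₂) + h₂ * c * kG α (νf h₂)) := by rw [← Eq h₂ hm₂]
    nlinarith [mul_le_mul_of_nonneg_left hF21 hm₁.le,
      mul_pos (sub_pos.2 h12) hFpos,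
      mul_nonneg (mul_nonneg (mul_nonneg hm₁.le hm₂.le) hcpos.le) (sub_nonneg.2 hG21)]
  · intro h hh
    obtain hp := (hνf h hh).1
    by_contra hcon
    push_neg at hcon
    have hGle : kG α νinf ≤ kG α (νf h) := kG_mono α hα hνinf hcon.le
    have hFpos := kF_pos α hα hp
    have hE : h * (c * kG α νinf) = kF α (νf h) + h * c * kG α (νf h) := by
      calc h * (c * kG α νinf) = h * (Tinf / D) := by rw [← hCG]
        _ = h * Tinf / D := by ring
        _ = _ := Eq h hh
    nlinarith [mul_le_mul_of_nonneg_left hGle (mul_nonneg hh.le hcpos.le)]
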